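/- Let α₁, …, α_m be complex numbers that are linearly independent over ℚ. Then the formal power series exp(α₁t), …, exp(α_mt) ∈ ℂ[[t]] are algebraically independent over ℂ. -/

import Mathlib

/-- The formal power series `exp(βt) = Σ_{n≥0} βⁿtⁿ/n! ∈ ℂ[[t]]`. -/
noncomputable def expPS (β : ℂ) : PowerSeries ℂ :=
  PowerSeries.mk fun n => β ^ n / (n.factorial : ℂ)

lemma expPS_eq (β : ℂ) : expPS β = PowerSeries.rescale β (PowerSeries.exp ℂ) := by
  ext n
  simp [expPS, PowerSeries.coeff_rescale, PowerSeries.coeff_exp, mul_one_div, div_eq_mul_inv]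

lemma expPS_mul (a b : ℂ) : expPS a * expPS b = expPS (a + b) := by
  rw [expPS_eq, expPS_eq, expPS_eq, PowerSeries.exp_mul_exp_eq_exp_add]

lemma expPS_zero : expPS 0 = 1 := by
  ext n
  cases n <;> simp [expPS, PowerSeries.coeff_one]

lemma expPS_pow (a : ℂ) (n : ℕ) : expPS a ^ n = expPS (n • a) := by
  induction n with
  | zero => simp [expPS_zero]
  | succ k ih =>
      rw [pow_succ, ih, expPS_mul, succ_nsmul]

lemma expPS_prod {ι : Type*} [DecidableEq ι] (s : Finset ι) (f : ι → ℕ) (a : ι → ℂ) :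
    ∏ i ∈ s, expPS (a i) ^ f i = expPS (∑ i ∈ s, f i • a i) := by
  induction s using Finset.induction with
  | empty => simp [expPS_zero]
  | insert _ _ h ih =>
      rw [Finset.prod_insert h, Finset.sum_insert h, ih, expPS_pow, expPS_mul]

lemma expPS_linearIndependent : LinearIndependent ℂ expPS := by
  classical
  rw [linearIndependent_iff']
  intro s g h i hi
  have hpow : ∀ n : ℕ, ∑ β ∈ s, g β * β ^ n = 0 := by
    intro n
    have h1 := congrArg (PowerSeries.coeff n) h
    simp only [map_sum, map_zero, PowerSeries.coeff_smul, expPS, PowerSeries.coeff_mk,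
      smul_eq_mul] at h1
    have h2 : ∑ β ∈ s, g β * β ^ n / (n.factorial : ℂ) = 0 := by
      simpa [mul_div_assoc] using h1
    rw [← Finset.sum_div, div_eq_zero_iff] at h2
    rcases h2 with h2 | h2
    · exact h2
    · exact absurd h2 (Nat.cast_ne_zero.mpr n.factorial_ne_zero)
  have hpoly : ∀ q : Polynomial ℂ, ∑ β ∈ s, g β * q.eval β = 0 := by
    intro q
    calc ∑ β ∈ s, g β * q.eval β
        = ∑ β ∈ s, ∑ j ∈ Finset.range (q.natDegree + 1), q.coeff j * (g β * β ^ j) := by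
          refine Finset.sum_congr rfl fun β _ => ?_
          rw [Polynomial.eval_eq_sum_range, Finset.mul_sum]
          exact Finset.sum_congr rfl fun j _ => by ring
      _ = ∑ j ∈ Finset.range (q.natDegree + 1), q.coeff j * ∑ β ∈ s, g β * β ^ j := by
          rw [Finset.sum_comm]
          exact Finset.sum_congr rfl fun j _ => (Finset.mul_sum _ _ _).symm
      _ = 0 := by simp [hpow]
  set q : Polynomial ℂ := ∏ β ∈ s.erase i, (Polynomial.X - Polynomial.C β) with hq
  have hqi : q.eval i ≠ 0 := by
    rw [hq, Polynomial.eval_prod]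
    refine Finset.prod_ne_zero_iff.mpr fun β hβ => ?_
    simp only [Polynomial.eval_sub, Polynomial.eval_X, Polynomial.eval_C, sub_ne_zero]
    exact ((Finset.mem_erase.mp hβ).1).symm
  have hqz : ∀ β ∈ s, β ≠ i → q.eval β = 0 := by
    intro β hβ hne
    rw [hq, Polynomial.eval_prod]
    refine Finset.prod_eq_zero (Finset.mem_erase.mpr ⟨hne, hβ⟩) ?_
    simp
  have := hpoly q
  rw [Finset.sum_eq_single_of_mem i hi (fun β hβ hne => by rw [hqz β hβ hne, mul_zero])] at this
  exact (mul_eq_zero.mp this).resolve_right hqi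

/-- if `α₁, …, α_m ∈ ℂ` are linearly independent over `ℚ`, then the power
series `exp(α₁t), …, exp(α_mt)` are algebraically independent over `ℂ`. -/
theorem algebraicIndependent_expPS {m : ℕ} (α : Fin m → ℂ)
    (hα : LinearIndependent ℚ α) :
    AlgebraicIndependent ℂ fun i => expPS (α i) := by
  classical
  have hσ_inj : Function.Injective (fun k : Fin m →₀ ℕ => ∑ i : Fin m, k i • α i) := by
    intro k k' hkk
    simp only at hkk
    have hq : ∀ i : Fin m, ((k i : ℚ) - (k' i : ℚ)) = 0 := by
      apply Fintype.linearIndependent_iff.mp hα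
      have hs : ∑ i : Fin m, ((k i : ℚ) - (k' i : ℚ)) • α i
          = (∑ i : Fin m, k i • α i) - ∑ i : Fin m, k' i • α i := by
        simp only [sub_smul, Finset.sum_sub_distrib, Nat.cast_smul_eq_nsmul]
      rw [hs, hkk, sub_self]
    ext i
    have := sub_eq_zero.mp (hq i)
    exact_mod_cast this
  have hLI : LinearIndependent ℂ
      (fun k : Fin m →₀ ℕ => expPS (∑ i : Fin m, k i • α i)) :=
    expPS_linearIndependent.comp _ hσ_inj
  rw [algebraicIndependent_iff]
  intro p hp
  have hsum : ∑ k ∈ p.support, p.coeff k • expPS (∑ i : Fin m, k i • α i) = 0 := by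
    rw [← hp, MvPolynomial.aeval_def, MvPolynomial.eval₂_eq]
    refine Finset.sum_congr rfl fun k hk => ?_
    have hmon : ∏ i ∈ k.support, expPS (α i) ^ k i
        = expPS (∑ i : Fin m, k i • α i) := by
      rw [expPS_prod]
      refine congrArg expPS (Finset.sum_subset (Finset.subset_univ _) fun i _ hi => ?_)
      rw [Finsupp.notMem_support_iff.mp hi, zero_smul]
    rw [Algebra.smul_def, hmon]
  have hzero := linearIndependent_iff'.mp hLI p.support p.coeff hsum
  ext k
  by_cases hk : k ∈ p.support
  · simpa using hzero k hk
  · simpa using MvPolynomial.notMem_support_iff.mp hk
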